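/- (Genus-one Fay identity) For all z, w, x, y ∈ ℂ at which all occurring Kronecker functions are defined (i.e. the relevant theta function values are nonzero), φ(z,x)φ(w,y) = φ(z−w,x)φ(w,x+y) + φ(w−z,y)φ(z,x+y). -/

import Mathlib

open Complex

/-- The odd theta function
`θ(u) = −∑_{k∈ℤ} exp(πiτ(k+1/2)² + 2πi(k+1/2)(u+1/2))`. -/
noncomputable def jtheta (τ u : ℂ) : ℂ :=
  -∑' k : ℤ, Complex.exp (Real.pi * Complex.I * τ * ((k : ℂ) + 1/2)^2 +
      2 * Real.pi * Complex.I * ((k : ℂ) + 1/2) * (u + 1/2))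


/-- The Kronecker elliptic function `φ(u,x) = θ'(0)θ(u+x)/(θ(u)θ(x))`. -/
noncomputable def kron (τ u x : ℂ) : ℂ :=
  deriv (jtheta τ) 0 * jtheta τ (u + x) / (jtheta τ u * jtheta τ x)

local notation "πc" => (Real.pi : ℂ)

noncomputable def tt (τ u : ℂ) (k : ℤ) : ℂ :=
  Complex.exp (Real.pi * Complex.I * τ * ((k : ℂ) + 1/2)^2 +
      2 * Real.pi * Complex.I * ((k : ℂ) + 1/2) * (u + 1/2))

lemma jtheta_eq (τ u : ℂ) : jtheta τ u = -∑' k : ℤ, tt τ u k := rfl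

lemma summable_norm_tt {τ : ℂ} (hτ : 0 < τ.im) (u : ℂ) :
    Summable fun k : ℤ => ‖tt τ u k‖ := by
  have h : ∀ k : ℤ, tt τ u k
      = Complex.exp (πc * I * τ / 4 + πc * I * (u + 1/2)) *
        jacobiTheta₂_term k (u + 1/2 + τ/2) τ := by
    intro k
    rw [tt, jacobiTheta₂_term, ← Complex.exp_add]
    congr 1
    push_cast
    ring
  have hsum : Summable fun k : ℤ => ‖jacobiTheta₂_term k (u + 1/2 + τ/2) τ‖ := by
    refine Summable.of_nonneg_of_le (fun k => norm_nonneg _)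
      (fun k => norm_jacobiTheta₂_term_le hτ (le_refl |(u + 1/2 + τ/2).im|) le_rfl k) ?_
    simpa using summable_pow_mul_jacobiTheta₂_term_bound |(u + 1/2 + τ/2).im| hτ 0
  simp_rw [h, norm_mul]
  exact hsum.mul_left _

lemma hasSum_tt {τ : ℂ} (hτ : 0 < τ.im) (u : ℂ) :
    HasSum (tt τ u) (-(jtheta τ u)) := by
  rw [jtheta_eq, neg_neg]
  exact ((summable_norm_tt hτ u).of_norm).hasSum

set_option maxHeartbeats 1000000 in
abbrev K4 := (ℤ × ℤ) × (ℤ × ℤ)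

set_option maxHeartbeats 1000000 in
lemma hasSum_quad {τ : ℂ} (hτ : 0 < τ.im) (u₁ u₂ u₃ u₄ : ℂ) :
    HasSum (fun p : K4 => tt τ u₁ p.1.1 * tt τ u₂ p.1.2 * (tt τ u₃ p.2.1 * tt τ u₄ p.2.2))
      (jtheta τ u₁ * jtheta τ u₂ * (jtheta τ u₃ * jtheta τ u₄)) := by
  have h12 : HasSum (fun p : ℤ × ℤ => tt τ u₁ p.1 * tt τ u₂ p.2)
      (-(jtheta τ u₁) * -(jtheta τ u₂)) :=
    (hasSum_tt hτ u₁).mul (hasSum_tt hτ u₂)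
      (summable_mul_of_summable_norm (summable_norm_tt hτ u₁) (summable_norm_tt hτ u₂))
  have h34 : HasSum (fun p : ℤ × ℤ => tt τ u₃ p.1 * tt τ u₄ p.2)
      (-(jtheta τ u₃) * -(jtheta τ u₄)) :=
    (hasSum_tt hτ u₃).mul (hasSum_tt hτ u₄)
      (summable_mul_of_summable_norm (summable_norm_tt hτ u₃) (summable_norm_tt hτ u₄))
  have hn12 : Summable fun p : ℤ × ℤ => ‖tt τ u₁ p.1 * tt τ u₂ p.2‖ :=
    (summable_norm_tt hτ u₁).mul_norm (summable_norm_tt hτ u₂)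
  have hn34 : Summable fun p : ℤ × ℤ => ‖tt τ u₃ p.1 * tt τ u₄ p.2‖ :=
    (summable_norm_tt hτ u₃).mul_norm (summable_norm_tt hτ u₄)
  have sm := summable_mul_of_summable_norm hn12 hn34
  have h := h12.mul h34 sm
  have he : (-(jtheta τ u₁) * -(jtheta τ u₂)) * (-(jtheta τ u₃) * -(jtheta τ u₄))
      = jtheta τ u₁ * jtheta τ u₂ * (jtheta τ u₃ * jtheta τ u₄) := by ring
  rw [he] at h
  exact h

noncomputable def GG (τ Z A B C : ℂ) (n : K4) : ℂ :=
  Complex.exp (πc * I * τ * (((n.1.1:ℂ))^2 + ((n.1.2:ℂ))^2 + ((n.2.1:ℂ))^2 + ((n.2.2:ℂ))^2) / 2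
      + 2 * πc * I * ((n.1.1:ℂ) * Z + (n.1.2:ℂ) * A + (n.2.1:ℂ) * B + (n.2.2:ℂ) * C))

noncomputable def FF1 (τ Z A B C : ℂ) (n : K4) : ℂ :=
  if (n.1.1 + n.1.2) % 2 ≠ 0 ∧ (n.2.1 + n.2.2) % 2 ≠ 0 then
    GG τ Z A B C n * Complex.exp (πc * I * ((n.1.1 + n.2.1 : ℤ) : ℂ)) else 0

noncomputable def FF2 (τ Z A B C : ℂ) (n : K4) : ℂ :=
  if (n.1.1 + n.2.1) % 2 ≠ 0 ∧ (n.1.2 + n.2.2) % 2 ≠ 0 then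
    GG τ Z A B C n * Complex.exp (πc * I * ((n.1.1 + n.2.2 : ℤ) : ℂ)) else 0

noncomputable def FF3 (τ Z A B C : ℂ) (n : K4) : ℂ :=
  if (n.1.1 + n.2.2) % 2 ≠ 0 ∧ (n.1.2 + n.2.1) % 2 ≠ 0 then
    GG τ Z A B C n * Complex.exp (πc * I * ((n.1.1 + n.1.2 : ℤ) : ℂ)) else 0

def ii1 : K4 → K4 := fun k =>
  ((k.1.1 + k.1.2 + 1, k.1.1 - k.1.2), (k.2.1 + k.2.2 + 1, k.2.1 - k.2.2))
def ii2 : K4 → K4 := fun k =>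
  ((k.1.1 + k.1.2 + 1, k.2.1 - k.2.2), (k.1.1 - k.1.2, k.2.1 + k.2.2 + 1))
def ii3 : K4 → K4 := fun k =>
  ((k.1.1 + k.1.2 + 1, k.2.1 + k.2.2 + 1), (k.2.1 - k.2.2, k.1.1 - k.1.2))

lemma exp_odd_pi (a b : ℤ) (h : (a + b) % 2 ≠ 0) :
    Complex.exp (πc * I * (a:ℂ)) = -Complex.exp (πc * I * (b:ℂ)) := by
  obtain ⟨d, hd⟩ : ∃ d : ℤ, a = b + 2*d + 1 := ⟨(a-b-1)/2, by omega⟩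
  subst hd
  have : πc * I * ((b + 2*d + 1 : ℤ) : ℂ) = πc * I * (b:ℂ) + (d:ℂ) * (2 * πc * I) + πc * I := by
    push_cast; ring
  rw [this, Complex.exp_add, Complex.exp_add, Complex.exp_int_mul_two_pi_mul_I,
    Complex.exp_pi_mul_I]
  ring

lemma cancel (τ Z A B C : ℂ) (n : K4) :
    FF1 τ Z A B C n + FF2 τ Z A B C n + FF3 τ Z A B C n = 0 := by
  obtain ⟨⟨n0, n1⟩, ⟨n2, n3⟩⟩ := n
  simp only [FF1, FF2, FF3]
  split_ifs with h1 h2 h3 h2' h3' h3'' h3'''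
  · exfalso; omega
  · rw [exp_odd_pi (n0+n2) (n0+n3) (by omega)]; ring
  · rw [exp_odd_pi (n0+n2) (n0+n1) (by omega)]; ring
  · exfalso; omega
  · rw [exp_odd_pi (n0+n3) (n0+n1) (by omega)]; ring
  · exfalso; omega
  · exfalso; omega
  · ring

lemma ii1_inj : Function.Injective ii1 := by
  intro a b h
  simp only [ii1, Prod.mk.injEq] at h
  obtain ⟨⟨h1, h2⟩, h3, h4⟩ := h
  ext <;> omega

lemma ii2_inj : Function.Injective ii2 := by
  intro a b h
  simp only [ii2, Prod.mk.injEq] at h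
  obtain ⟨⟨h1, h2⟩, h3, h4⟩ := h
  ext <;> omega

lemma ii3_inj : Function.Injective ii3 := by
  intro a b h
  simp only [ii3, Prod.mk.injEq] at h
  obtain ⟨⟨h1, h2⟩, h3, h4⟩ := h
  ext <;> omega

lemma FF1_vanish (τ Z A B C : ℂ) : ∀ n ∉ Set.range ii1, FF1 τ Z A B C n = 0 := by
  rintro ⟨⟨n0, n1⟩, ⟨n2, n3⟩⟩ hn
  rw [FF1, if_neg]
  rintro ⟨hc1, hc2⟩
  have hd1 : (n0 + n1) % 2 ≠ 0 := hc1
  have hd2 : (n2 + n3) % 2 ≠ 0 := hc2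
  refine hn ⟨(((n0+n1-1)/2, (n0-n1-1)/2), ((n2+n3-1)/2, (n2-n3-1)/2)), ?_⟩
  simp only [ii1, Prod.mk.injEq]
  refine ⟨⟨?_, ?_⟩, ?_, ?_⟩ <;> omega

lemma FF2_vanish (τ Z A B C : ℂ) : ∀ n ∉ Set.range ii2, FF2 τ Z A B C n = 0 := by
  rintro ⟨⟨n0, n1⟩, ⟨n2, n3⟩⟩ hn
  rw [FF2, if_neg]
  rintro ⟨hc1, hc2⟩
  have hd1 : (n0 + n2) % 2 ≠ 0 := hc1
  have hd2 : (n1 + n3) % 2 ≠ 0 := hc2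
  refine hn ⟨(((n0+n2-1)/2, (n0-n2-1)/2), ((n3+n1-1)/2, (n3-n1-1)/2)), ?_⟩
  simp only [ii2, Prod.mk.injEq]
  refine ⟨⟨?_, ?_⟩, ?_, ?_⟩ <;> omega

lemma FF3_vanish (τ Z A B C : ℂ) : ∀ n ∉ Set.range ii3, FF3 τ Z A B C n = 0 := by
  rintro ⟨⟨n0, n1⟩, ⟨n2, n3⟩⟩ hn
  rw [FF3, if_neg]
  rintro ⟨hc1, hc2⟩
  have hd1 : (n0 + n3) % 2 ≠ 0 := hc1
  have hd2 : (n1 + n2) % 2 ≠ 0 := hc2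
  refine hn ⟨(((n0+n3-1)/2, (n0-n3-1)/2), ((n1+n2-1)/2, (n1-n2-1)/2)), ?_⟩
  simp only [ii3, Prod.mk.injEq]
  refine ⟨⟨?_, ?_⟩, ?_, ?_⟩ <;> omega

lemma FF1_comp (τ Z A B C : ℂ) (k : K4) :
    FF1 τ Z A B C (ii1 k) = tt τ (Z+A) k.1.1 * tt τ (Z-A) k.1.2 *
      (tt τ (B+C) k.2.1 * tt τ (B-C) k.2.2) := by
  obtain ⟨⟨k1, k2⟩, ⟨k3, k4⟩⟩ := k
  rw [FF1, if_pos (by simp only [ii1]; constructor <;> omega)]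
  simp only [ii1]
  simp only [GG, tt, ← Complex.exp_add]
  congr 1
  push_cast
  ring

lemma FF2_comp (τ Z A B C : ℂ) (k : K4) :
    FF2 τ Z A B C (ii2 k) = tt τ (Z+B) k.1.1 * tt τ (Z-B) k.1.2 *
      (tt τ (C+A) k.2.1 * tt τ (C-A) k.2.2) := by
  obtain ⟨⟨k1, k2⟩, ⟨k3, k4⟩⟩ := k
  rw [FF2, if_pos (by simp only [ii2]; constructor <;> omega)]
  simp only [ii2]
  simp only [GG, tt, ← Complex.exp_add]
  congr 1
  push_cast
  ring

lemma FF3_comp (τ Z A B C : ℂ) (k : K4) :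
    FF3 τ Z A B C (ii3 k) = tt τ (Z+C) k.1.1 * tt τ (Z-C) k.1.2 *
      (tt τ (A+B) k.2.1 * tt τ (A-B) k.2.2) := by
  obtain ⟨⟨k1, k2⟩, ⟨k3, k4⟩⟩ := k
  rw [FF3, if_pos (by simp only [ii3]; constructor <;> omega)]
  simp only [ii3]
  simp only [GG, tt, ← Complex.exp_add]
  congr 1
  push_cast
  ring

set_option maxHeartbeats 1000000 in
lemma hasSum_FF1 {τ : ℂ} (hτ : 0 < τ.im) (Z A B C : ℂ) :
    HasSum (FF1 τ Z A B C)
      (jtheta τ (Z+A) * jtheta τ (Z-A) * (jtheta τ (B+C) * jtheta τ (B-C))) := by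
  refine (ii1_inj.hasSum_iff (FF1_vanish τ Z A B C)).mp ?_
  exact (hasSum_quad hτ (Z+A) (Z-A) (B+C) (B-C)).congr_fun
    (fun k => (FF1_comp τ Z A B C k))

set_option maxHeartbeats 1000000 in
lemma hasSum_FF2 {τ : ℂ} (hτ : 0 < τ.im) (Z A B C : ℂ) :
    HasSum (FF2 τ Z A B C)
      (jtheta τ (Z+B) * jtheta τ (Z-B) * (jtheta τ (C+A) * jtheta τ (C-A))) := by
  refine (ii2_inj.hasSum_iff (FF2_vanish τ Z A B C)).mp ?_
  exact (hasSum_quad hτ (Z+B) (Z-B) (C+A) (C-A)).congr_fun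
    (fun k => (FF2_comp τ Z A B C k))

set_option maxHeartbeats 1000000 in
lemma hasSum_FF3 {τ : ℂ} (hτ : 0 < τ.im) (Z A B C : ℂ) :
    HasSum (FF3 τ Z A B C)
      (jtheta τ (Z+C) * jtheta τ (Z-C) * (jtheta τ (A+B) * jtheta τ (A-B))) := by
  refine (ii3_inj.hasSum_iff (FF3_vanish τ Z A B C)).mp ?_
  exact (hasSum_quad hτ (Z+C) (Z-C) (A+B) (A-B)).congr_fun
    (fun k => (FF3_comp τ Z A B C k))

set_option maxHeartbeats 1000000 in
lemma weierstrass {τ : ℂ} (hτ : 0 < τ.im) (Z A B C : ℂ) :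
    jtheta τ (Z+A) * jtheta τ (Z-A) * (jtheta τ (B+C) * jtheta τ (B-C))
    + jtheta τ (Z+B) * jtheta τ (Z-B) * (jtheta τ (C+A) * jtheta τ (C-A))
    + jtheta τ (Z+C) * jtheta τ (Z-C) * (jtheta τ (A+B) * jtheta τ (A-B)) = 0 := by
  have h := ((hasSum_FF1 hτ Z A B C).add (hasSum_FF2 hτ Z A B C)).add (hasSum_FF3 hτ Z A B C)
  have h0 : (fun n => FF1 τ Z A B C n + FF2 τ Z A B C n + FF3 τ Z A B C n)
      = fun _ : K4 => (0 : ℂ) := funext (cancel τ Z A B C)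
  rw [h0] at h
  exact h.unique hasSum_zero

lemma jtheta_neg (τ u : ℂ) : jtheta τ (-u) = -jtheta τ u := by
  have e : ℤ ≃ ℤ := Equiv.subLeft (-1)
  have h1 : ∑' k : ℤ, tt τ (-u) k = ∑' k : ℤ, tt τ (-u) ((Equiv.subLeft (-1 : ℤ)) k) :=
    ((Equiv.subLeft (-1 : ℤ)).tsum_eq (tt τ (-u))).symm
  have h2 : ∀ k : ℤ, tt τ (-u) ((Equiv.subLeft (-1 : ℤ)) k) = -tt τ u k := by
    intro k
    simp only [Equiv.subLeft_apply, tt]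
    have he : πc * I * τ * (((-1 - k : ℤ) : ℂ) + 1/2)^2 +
        2 * πc * I * (((-1 - k : ℤ) : ℂ) + 1/2) * (-u + 1/2)
        = (πc * I * τ * ((k : ℂ) + 1/2)^2 + 2 * πc * I * ((k : ℂ) + 1/2) * (u + 1/2))
          + ((-(k:ℂ) - 1) * (2 * πc * I) + πc * I) := by
      push_cast
      ring
    rw [he, Complex.exp_add, Complex.exp_add]
    have : ((-(k:ℂ) - 1) : ℂ) = ((-k - 1 : ℤ) : ℂ) := by push_cast; ring
    rw [this, Complex.exp_add, Complex.exp_int_mul_two_pi_mul_I, Complex.exp_pi_mul_I]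
    ring
  rw [jtheta_eq, jtheta_eq, h1]
  simp_rw [h2]
  rw [tsum_neg]

/-- The genus-one Fay identity for the Kronecker function. -/
theorem fay_identity (τ : ℂ) (hτ : 0 < τ.im) (z w x y : ℂ)
    (hz : jtheta τ z ≠ 0) (hw : jtheta τ w ≠ 0)
    (hx : jtheta τ x ≠ 0) (hy : jtheta τ y ≠ 0)
    (hzw : jtheta τ (z - w) ≠ 0) (hwz : jtheta τ (w - z) ≠ 0)
    (hxy : jtheta τ (x + y) ≠ 0) :
    kron τ z x * kron τ w y =
      kron τ (z - w) x * kron τ w (x + y) + kron τ (w - z) y * kron τ z (x + y) := by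
  have hW := weierstrass hτ ((z+w+x+y)/2) ((z-w+x-y)/2) ((x+y+z-w)/2) ((x+y-z+w)/2)
  rw [show (z+w+x+y)/2 + (z-w+x-y)/2 = z+x by ring,
    show (z+w+x+y)/2 - (z-w+x-y)/2 = w+y by ring,
    show (x+y+z-w)/2 + (x+y-z+w)/2 = x+y by ring,
    show (x+y+z-w)/2 - (x+y-z+w)/2 = z-w by ring,
    show (z+w+x+y)/2 + (x+y+z-w)/2 = z+(x+y) by ring,
    show (z+w+x+y)/2 - (x+y+z-w)/2 = w by ring,
    show (x+y-z+w)/2 + (z-w+x-y)/2 = x by ring,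
    show (x+y-z+w)/2 - (z-w+x-y)/2 = w-z+y by ring,
    show (z+w+x+y)/2 + (x+y-z+w)/2 = w+(x+y) by ring,
    show (z+w+x+y)/2 - (x+y-z+w)/2 = z by ring,
    show (z-w+x-y)/2 + (x+y+z-w)/2 = z-w+x by ring,
    show (z-w+x-y)/2 - (x+y+z-w)/2 = -y by ring, jtheta_neg] at hW
  have hodd : jtheta τ (w - z) = -jtheta τ (z - w) := by
    rw [show w - z = -(z - w) by ring, jtheta_neg]
  simp only [kron]
  rw [hodd]
  field_simp
  linear_combination (deriv (jtheta τ) 0)^2 * hW
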